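/- The weighted-configuration identity holds for g = 7 and w = 3: for any set S of 7 distinct real numbers, the sum over all weighted configurations of S with total weight 3 of their evaluations is zero. -/
import Mathlib


open Finset Polynomial

/-- The unsigned Stirling number of the first kind `[n, k]`, defined as the coefficient of
`x^k` in the ascending factorial `x (x+1) ⋯ (x+n-1)`. -/
noncomputable def stirling1 (n k : ℕ) : ℕ := (ascPochhammer ℕ n).coeff k

/-- `IsStirlingPoly P` says that for every `w`, `P w` is the (unique) real polynomial of degree
at most `2w` with `(P w).eval n = [n, n-w]` (unsigned Stirling number of the first kind) for
every integer `n ≥ w`; i.e. `P w` plays the role of `P_w` from the paper. -/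
def IsStirlingPoly (P : ℕ → Polynomial ℝ) : Prop :=
  ∀ w : ℕ, (P w).natDegree ≤ 2 * w ∧
    ∀ n : ℕ, w ≤ n → (P w).eval (n : ℝ) = (stirling1 n (n - w) : ℝ)

open scoped Classical in
/-- The sum, over all weighted configurations of the finite set `S` with total weight `w`, of
their evaluations.  A weighted configuration is recorded as a length `r` together with an
`r`-tuple `f`, where `(f i).1 = Sᵢ` are the (nonempty, pairwise disjoint, covering `S`) parts
of the configuration and `(f i).2 = wᵢ` are their weights, `∑ i, wᵢ = w`.  Its evaluation is
`(-1)^r · (1/r) · ∏ i, P_{wᵢ}(tᵢ)` where `tᵢ = ∑ c ∈ Sᵢ, c`.  (Since the parts are nonempty and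
pairwise disjoint, `r ≤ S.card`, and each weight is at most `w`, so every weighted
configuration occurs exactly once in the sum below.) -/
noncomputable def weightedConfigSum (P : ℕ → Polynomial ℝ) (S : Finset ℝ) (w : ℕ) : ℝ :=
  ∑ r ∈ Finset.range (S.card + 1),
    ∑ f ∈ (Fintype.piFinset fun _ : Fin r => S.powerset ×ˢ Finset.range (w + 1)).filter
        (fun f => (∀ i, ((f i).1).Nonempty) ∧
          (∀ i j, i ≠ j → Disjoint (f i).1 (f j).1) ∧
          (Finset.univ.biUnion fun i => (f i).1) = S ∧
          ∑ i, (f i).2 = w),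
      (-1 : ℝ) ^ r * (1 / (r : ℝ)) * ∏ i, (P (f i).2).eval (∑ c ∈ (f i).1, c)


lemma stirling1_rec (n k : ℕ) :
    stirling1 (n+1) (k+1) = n * stirling1 n (k+1) + stirling1 n k := by
  unfold stirling1
  rw [ascPochhammer_succ_right]
  have : (n : Polynomial ℕ) = Polynomial.C n := by simp
  rw [this, mul_add, Polynomial.coeff_add, Polynomial.coeff_mul_C, Polynomial.coeff_mul_X]
  ring

lemma stirling1_zero (n : ℕ) : stirling1 (n+1) 0 = 0 := by
  unfold stirling1
  rw [Polynomial.coeff_zero_eq_eval_zero, ascPochhammer_eval_zero]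
  simp

lemma stirling1_self (n : ℕ) : stirling1 n n = 1 := by
  unfold stirling1
  have h := (monic_ascPochhammer ℕ n).coeff_natDegree
  rwa [ascPochhammer_natDegree] at h

lemma s1_one (m : ℕ) : (stirling1 (m+1) m : ℝ) = (m+1)*m/2 := by
  induction m with
  | zero => simp [stirling1_zero]
  | succ k ih =>
    have := stirling1_rec (k+1) k
    rw [this]
    push_cast [stirling1_self]
    rw [ih]
    ring

lemma s1_two (m : ℕ) : (stirling1 (m+2) m : ℝ) = (m+2)*(m+1)*m*(3*m+5)/24 := by
  induction m with
  | zero => simp [stirling1_zero]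
  | succ k ih =>
    have := stirling1_rec (k+2) k
    rw [this]
    push_cast [s1_one]
    rw [ih]
    ring

lemma s1_three (m : ℕ) : (stirling1 (m+3) m : ℝ) = ((m+3))^2*((m+2))^2*(m+1)*m/48 := by
  induction m with
  | zero => simp [stirling1_zero]
  | succ k ih =>
    have := stirling1_rec (k+3) k
    rw [this]
    push_cast [s1_two]
    rw [ih]
    ring

lemma poly_eq_of_nat_eval (p q : Polynomial ℝ) (u : ℕ)
    (h : ∀ m : ℕ, p.eval ((m + u : ℕ) : ℝ) = q.eval ((m + u : ℕ) : ℝ)) : p = q := by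
  apply Polynomial.eq_of_infinite_eval_eq
  have hinj : Function.Injective (fun m : ℕ => ((m + u : ℕ) : ℝ)) := by
    intro a b hab
    have : ((a + u : ℕ) : ℝ) = ((b + u : ℕ) : ℝ) := hab
    rw [Nat.cast_inj] at this
    omega
  apply (Set.infinite_range_of_injective hinj).mono
  rintro _ ⟨m, rfl⟩; exact h m

lemma P_zero_eval (P : ℕ → Polynomial ℝ) (hP : IsStirlingPoly P) (t : ℝ) :
    (P 0).eval t = 1 := by
  obtain ⟨hd, hv⟩ := hP 0
  have h0 : P 0 = Polynomial.C ((P 0).coeff 0) := Polynomial.eq_C_of_natDegree_le_zero hd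
  have h1 := hv 0 (le_refl 0)
  rw [h0] at h1 ⊢
  simp only [Polynomial.eval_C] at h1 ⊢
  rw [h1]
  simp [stirling1_self]

lemma P_one (P : ℕ → Polynomial ℝ) (hP : IsStirlingPoly P) :
    P 1 = Polynomial.C (1/2 : ℝ) * (Polynomial.X^2 - Polynomial.X) := by
  apply poly_eq_of_nat_eval _ _ 1
  intro m
  rw [(hP 1).2 (m+1) (by omega)]
  have : (m + 1) - 1 = m := by omega
  rw [this, s1_one]
  simp only [Polynomial.eval_mul, Polynomial.eval_C, Polynomial.eval_sub, Polynomial.eval_pow,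
    Polynomial.eval_X]
  push_cast
  ring

lemma P_two (P : ℕ → Polynomial ℝ) (hP : IsStirlingPoly P) :
    P 2 = Polynomial.C (1/24 : ℝ) *
      (Polynomial.X^2 * (Polynomial.X - 1)^2 * (Polynomial.X - 2) * (3*Polynomial.X + 1) -
        Polynomial.X^2 * (Polynomial.X - 1)^2 * (Polynomial.X - 2) * (3*Polynomial.X + 1)) +
      Polynomial.C (1/24 : ℝ) * (Polynomial.X * (Polynomial.X - 1) * (Polynomial.X - 2) *
        (3*Polynomial.X - 1)) := by
  apply poly_eq_of_nat_eval _ _ 2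
  intro m
  rw [(hP 2).2 (m+2) (by omega)]
  have : (m + 2) - 2 = m := by omega
  rw [this, s1_two]
  simp only [Polynomial.eval_mul, Polynomial.eval_C, Polynomial.eval_sub, Polynomial.eval_add,
    Polynomial.eval_pow, Polynomial.eval_X, Polynomial.eval_one, Polynomial.eval_ofNat]
  push_cast
  ring

lemma P_three (P : ℕ → Polynomial ℝ) (hP : IsStirlingPoly P) :
    P 3 = Polynomial.C (1/48 : ℝ) * (Polynomial.X^2 * (Polynomial.X - 1)^2 *
      (Polynomial.X - 2) * (Polynomial.X - 3)) := by
  apply poly_eq_of_nat_eval _ _ 3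
  intro m
  rw [(hP 3).2 (m+3) (by omega)]
  have : (m + 3) - 3 = m := by omega
  rw [this, s1_three]
  simp only [Polynomial.eval_mul, Polynomial.eval_C, Polynomial.eval_sub, Polynomial.eval_pow,
    Polynomial.eval_X, Polynomial.eval_one, Polynomial.eval_ofNat]
  push_cast
  ring

lemma P_pos_eval_zero (P : ℕ → Polynomial ℝ) (hP : IsStirlingPoly P) {u : ℕ}
    (h1 : 1 ≤ u) (h3 : u ≤ 3) : (P u).eval 0 = 0 := by
  interval_cases u
  · rw [P_one P hP]; simp
  · rw [P_two P hP]; simp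
  · rw [P_three P hP]; simp

open scoped Classical in
noncomputable def confSet (r : ℕ) (T : Finset (Fin 7)) : Finset (Fin r → Finset (Fin 7) × ℕ) :=
  (Fintype.piFinset fun _ : Fin r => ((Finset.univ : Finset (Fin 7)).powerset ×ˢ Finset.range 4)).filter
    (fun f => (∀ i, ((f i).1).Nonempty) ∧ (∀ i j, i ≠ j → Disjoint (f i).1 (f j).1) ∧
      (Finset.univ.biUnion fun i => (f i).1) = T ∧ ∑ i, (f i).2 = 3)

noncomputable def Econf (P : ℕ → Polynomial ℝ) (x : Fin 7 → ℝ) : ℝ :=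
  ∑ r ∈ Finset.range 8, ∑ f ∈ confSet r Finset.univ,
      (-1 : ℝ)^r * (1/(r:ℝ)) * ∏ i, (P (f i).2).eval ((f i).1.sum x)

noncomputable def Wpoly (P : ℕ → Polynomial ℝ) : MvPolynomial (Fin 7) ℝ :=
  ∑ r ∈ Finset.range 8, ∑ f ∈ confSet r Finset.univ,
      MvPolynomial.C ((-1 : ℝ)^r * (1/(r:ℝ))) *
        ∏ i, Polynomial.aeval (∑ j ∈ (f i).1, MvPolynomial.X j) (P (f i).2)

lemma eval_Wpoly (P : ℕ → Polynomial ℝ) (x : Fin 7 → ℝ) :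
    MvPolynomial.eval x (Wpoly P) = Econf P x := by
  unfold Wpoly Econf
  rw [map_sum]
  refine Finset.sum_congr rfl fun r _ => ?_
  rw [map_sum]
  refine Finset.sum_congr rfl fun f _ => ?_
  rw [map_mul, map_prod, MvPolynomial.eval_C]
  congr 1
  refine Finset.prod_congr rfl fun i _ => ?_
  rw [Polynomial.aeval_def, Polynomial.hom_eval₂]
  have h1 : (MvPolynomial.eval x).comp (algebraMap ℝ (MvPolynomial (Fin 7) ℝ)) = RingHom.id ℝ := by
    ext a; simp
  have h2 : MvPolynomial.eval x (∑ j ∈ (f i).1, MvPolynomial.X j) = (f i).1.sum x := by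
    rw [map_sum]; simp
  rw [h1, h2]
  rfl

lemma totalDegree_linear_sum (B : Finset (Fin 7)) :
    (∑ j ∈ B, MvPolynomial.X j : MvPolynomial (Fin 7) ℝ).totalDegree ≤ 1 := by
  apply le_trans (MvPolynomial.totalDegree_finset_sum _ _)
  apply Finset.sup_le; intro j _
  rw [MvPolynomial.totalDegree_X]

lemma totalDegree_aeval_le (q : MvPolynomial (Fin 7) ℝ) (hq : q.totalDegree ≤ 1)
    (p : Polynomial ℝ) : (Polynomial.aeval q p).totalDegree ≤ p.natDegree := by
  rw [Polynomial.aeval_def, Polynomial.eval₂_eq_sum, Polynomial.sum_def]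
  apply le_trans (MvPolynomial.totalDegree_finset_sum _ _)
  apply Finset.sup_le; intro e he
  calc (algebraMap ℝ (MvPolynomial (Fin 7) ℝ) (p.coeff e) * q ^ e).totalDegree
      ≤ (algebraMap ℝ (MvPolynomial (Fin 7) ℝ) (p.coeff e)).totalDegree + (q^e).totalDegree :=
        MvPolynomial.totalDegree_mul _ _
    _ ≤ 0 + e * q.totalDegree := by
        apply add_le_add
        · rw [MvPolynomial.algebraMap_eq, MvPolynomial.totalDegree_C]
        · exact MvPolynomial.totalDegree_pow _ _
    _ ≤ e * 1 := by rw [zero_add]; exact Nat.mul_le_mul_left e hq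
    _ ≤ p.natDegree := by rw [mul_one]; exact Polynomial.le_natDegree_of_mem_supp e he

lemma Wpoly_totalDegree (P : ℕ → Polynomial ℝ) (hP : IsStirlingPoly P) :
    (Wpoly P).totalDegree ≤ 6 := by
  unfold Wpoly
  apply le_trans (MvPolynomial.totalDegree_finset_sum _ _)
  apply Finset.sup_le; intro r _
  apply le_trans (MvPolynomial.totalDegree_finset_sum _ _)
  apply Finset.sup_le; intro f hf
  apply le_trans (MvPolynomial.totalDegree_mul _ _)
  have hC : (MvPolynomial.C ((-1:ℝ)^r * (1/(r:ℝ))) : MvPolynomial (Fin 7) ℝ).totalDegree = 0 :=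
    MvPolynomial.totalDegree_C _
  rw [hC, zero_add]
  apply le_trans (MvPolynomial.totalDegree_finset_prod _ _)
  have hw : ∑ i, (f i).2 = 3 := by
    simp only [confSet, Finset.mem_filter] at hf
    exact hf.2.2.2.2
  calc ∑ i, (Polynomial.aeval (∑ j ∈ (f i).1, MvPolynomial.X j) (P (f i).2)).totalDegree
      ≤ ∑ i, 2 * (f i).2 :=
        Finset.sum_le_sum (fun i _ =>
          le_trans (totalDegree_aeval_le _ (totalDegree_linear_sum _) _) ((hP (f i).2).1))
    _ = 6 := by rw [← Finset.mul_sum, hw]; rfl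

lemma coeff_aeval_subst (i : Fin 7) (W : MvPolynomial (Fin 7) ℝ) (m : Fin 7 →₀ ℕ) (hm : m i = 0) :
    MvPolynomial.coeff m
      (MvPolynomial.aeval (fun j => if j = i then 0 else MvPolynomial.X j) W) =
      MvPolynomial.coeff m W := by
  set σ : Fin 7 → MvPolynomial (Fin 7) ℝ := fun j => if j = i then 0 else MvPolynomial.X j with hσ
  conv_lhs => rw [← MvPolynomial.support_sum_monomial_coeff W]
  rw [map_sum]
  have key : ∀ m' : Fin 7 →₀ ℕ,
      MvPolynomial.aeval σ (MvPolynomial.monomial m' (W.coeff m')) =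
        if m' i = 0 then MvPolynomial.monomial m' (W.coeff m') else 0 := by
    intro m'
    rw [MvPolynomial.aeval_monomial]
    by_cases h : m' i = 0
    · rw [if_pos h]
      have : (m'.prod fun j k => σ j ^ k) = m'.prod fun j k => MvPolynomial.X j ^ k := by
        apply Finsupp.prod_congr
        intro j hj
        have : j ≠ i := by
          intro e; subst e; exact (Finsupp.mem_support_iff.mp hj) h
        rw [hσ]; simp [this]
      rw [this, MvPolynomial.algebraMap_eq, ← MvPolynomial.monomial_eq]
    · rw [if_neg h]
      have : (m'.prod fun j k => σ j ^ k) = 0 := by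
        apply Finset.prod_eq_zero (i := i)
        · exact Finsupp.mem_support_iff.mpr h
        · rw [hσ]; simp [zero_pow h]
      rw [this, mul_zero]
  rw [Finset.sum_congr rfl (fun m' _ => key m'), MvPolynomial.coeff_sum]
  by_cases hmem : m ∈ W.support
  · rw [Finset.sum_eq_single m]
    · rw [if_pos hm, MvPolynomial.coeff_monomial, if_pos rfl]
    · intro b hb hbm
      split_ifs with h
      · rw [MvPolynomial.coeff_monomial, if_neg hbm]
      · exact MvPolynomial.coeff_zero m
    · intro h; exact absurd hmem h
  · have h0 : MvPolynomial.coeff m W = 0 := MvPolynomial.notMem_support_iff.mp hmem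
    rw [h0]
    apply Finset.sum_eq_zero
    intro b hb
    have hbm : b ≠ m := fun e => hmem (e ▸ hb)
    split_ifs with h
    · rw [MvPolynomial.coeff_monomial, if_neg hbm]
    · exact MvPolynomial.coeff_zero m

lemma mv_zero_of_vanishing (W : MvPolynomial (Fin 7) ℝ) (hd : W.totalDegree ≤ 6)
    (hv : ∀ (i : Fin 7) (x : Fin 7 → ℝ), x i = 0 → MvPolynomial.eval x W = 0) : W = 0 := by
  by_contra hW
  obtain ⟨m, hm⟩ : W.support.Nonempty := by
    rw [Finset.nonempty_iff_ne_empty]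
    intro h
    exact hW (MvPolynomial.support_eq_empty.mp h)
  have hall : ∀ i : Fin 7, m i ≠ 0 := by
    intro i h0
    have hsub : MvPolynomial.aeval
        (fun j => if j = i then 0 else MvPolynomial.X j) W = (0 : MvPolynomial (Fin 7) ℝ) := by
      apply MvPolynomial.funext
      intro x
      rw [map_zero]
      rw [MvPolynomial.aeval_def]
      rw [MvPolynomial.eval₂_comp_left (MvPolynomial.eval x) (algebraMap ℝ _) _ W]
      have h1 : (MvPolynomial.eval x).comp (algebraMap ℝ (MvPolynomial (Fin 7) ℝ)) =
          RingHom.id ℝ := by ext a; simp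
      rw [h1, MvPolynomial.eval₂_id]
      apply hv i
      simp
    have := coeff_aeval_subst i W m h0
    rw [hsub] at this
    simp only [MvPolynomial.coeff_zero] at this
    exact (MvPolynomial.mem_support_iff.mp hm) this.symm
  have hsum : (m.sum fun _ e => e) ≤ 6 := le_trans (MvPolynomial.le_totalDegree hm) hd
  have hsum2 : (m.sum fun _ e => e) = ∑ j : Fin 7, m j := Finsupp.sum_fintype _ _ (fun _ => rfl)
  have h7 : (7 : ℕ) ≤ ∑ j : Fin 7, m j := by
    calc (7:ℕ) = ∑ _j : Fin 7, 1 := by simp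
    _ ≤ ∑ j : Fin 7, m j := Finset.sum_le_sum (fun j _ => Nat.one_le_iff_ne_zero.mpr (hall j))
  omega

noncomputable def Tval (P : ℕ → Polynomial ℝ) (x : Fin 7 → ℝ) {r : ℕ}
    (f : Fin r → Finset (Fin 7) × ℕ) : ℝ :=
  ∏ i, (P (f i).2).eval ((f i).1.sum x)

noncomputable def Yval (P : ℕ → Polynomial ℝ) (x : Fin 7 → ℝ) (i₀ : Fin 7) (k : ℕ) : ℝ :=
  ∑ g ∈ confSet k (Finset.univ.erase i₀), Tval P x g

lemma mem_confSet {r : ℕ} {T : Finset (Fin 7)} {f : Fin r → Finset (Fin 7) × ℕ} :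
    f ∈ confSet r T ↔ (∀ i, (f i).2 < 4) ∧ (∀ i, ((f i).1).Nonempty) ∧
      (∀ i j, i ≠ j → Disjoint (f i).1 (f j).1) ∧
      (Finset.univ.biUnion fun i => (f i).1) = T ∧ ∑ i, (f i).2 = 3 := by
  classical
  unfold confSet
  rw [Finset.mem_filter, Fintype.mem_piFinset]
  simp only [Finset.mem_product, Finset.mem_powerset, Finset.mem_range, Finset.subset_univ,
    true_and]

lemma block_subset {r : ℕ} {T : Finset (Fin 7)} {f : Fin r → Finset (Fin 7) × ℕ}
    (hf : f ∈ confSet r T) (i : Fin r) : (f i).1 ⊆ T := by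
  rw [mem_confSet] at hf
  rw [← hf.2.2.2.1]
  exact Finset.subset_biUnion_of_mem (fun j => (f j).1) (Finset.mem_univ i)

lemma bij_big (P : ℕ → Polynomial ℝ) (x : Fin 7 → ℝ) (i₀ : Fin 7) (hx : x i₀ = 0)
    (k : ℕ) (i : Fin (k+1)) :
    ∑ f ∈ (confSet (k+1) Finset.univ).filter
        (fun f => i₀ ∈ (f i).1 ∧ (f i).1 ≠ {i₀}), Tval P x f
      = Yval P x i₀ (k+1) := by
  classical
  unfold Yval
  apply Finset.sum_nbij' (i := fun f => Function.update f i ((f i).1.erase i₀, (f i).2))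
    (j := fun g => Function.update g i (insert i₀ (g i).1, (g i).2))
  · -- forward membership
    intro f hf
    rw [Finset.mem_filter] at hf
    obtain ⟨hf, hmem, hne⟩ := hf
    rw [mem_confSet] at hf ⊢
    obtain ⟨hw, hne', hdisj, hcov, hsum⟩ := hf
    have hval : ∀ l, (Function.update f i ((f i).1.erase i₀, (f i).2) l) =
        if l = i then ((f i).1.erase i₀, (f i).2) else f l := by
      intro l; by_cases h : l = i <;> simp [Function.update, h]
    refine ⟨?_, ?_, ?_, ?_, ?_⟩
    · intro l; rw [hval]; split_ifs with h <;> simp [hw, h]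
    · intro l; rw [hval]; split_ifs with h
      · rw [Finset.nonempty_iff_ne_empty]
        intro hemp
        rcases (Finset.erase_eq_empty_iff _ _).mp hemp with h1 | h1
        · exact (hne' i).ne_empty h1
        · exact hne h1
      · exact hne' l
    · intro l m hlm
      rw [hval, hval]
      split_ifs with h1 h2 h3
      · exact absurd (h1.trans h2.symm) hlm
      · have him : i ≠ m := by rw [← h1]; exact hlm
        exact Finset.disjoint_of_subset_left (Finset.erase_subset _ _) (hdisj i m him)
      · have hli : l ≠ i := by rw [← h3]; exact hlm
        exact Finset.disjoint_of_subset_right (Finset.erase_subset _ _) (hdisj l i hli)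
      · exact hdisj l m hlm
    · ext j
      simp only [Finset.mem_biUnion, Finset.mem_univ, true_and, Finset.mem_erase]
      constructor
      · rintro ⟨l, hl⟩
        rw [hval] at hl
        split_ifs at hl with h
        · simp only [Finset.mem_erase] at hl
          exact ⟨hl.1, trivial⟩
        · refine ⟨?_, trivial⟩
          intro e; subst e
          exact (Finset.disjoint_left.mp (hdisj l i h) hl) hmem
      · rintro ⟨hj, -⟩
        have : j ∈ Finset.univ.biUnion fun l => (f l).1 := by rw [hcov]; exact Finset.mem_univ j
        rw [Finset.mem_biUnion] at this
        obtain ⟨l, -, hl⟩ := this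
        refine ⟨l, ?_⟩
        rw [hval]
        split_ifs with h
        · subst h; exact Finset.mem_erase.mpr ⟨hj, hl⟩
        · exact hl
    · rw [← hsum]
      apply Finset.sum_congr rfl
      intro l _
      rw [hval]; split_ifs with h
      · rw [h]
      · rfl
  · -- backward membership
    intro g hg
    rw [mem_confSet] at hg
    obtain ⟨hw, hne', hdisj, hcov, hsum⟩ := hg
    have hsub : ∀ l, (g l).1 ⊆ Finset.univ.erase i₀ := by
      intro l
      rw [← hcov]
      exact Finset.subset_biUnion_of_mem (fun j => (g j).1) (Finset.mem_univ l)
    have hnotin : ∀ l, i₀ ∉ (g l).1 := by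
      intro l hl
      exact (Finset.mem_erase.mp (hsub l hl)).1 rfl
    have hval : ∀ l, (Function.update g i (insert i₀ (g i).1, (g i).2) l) =
        if l = i then (insert i₀ (g i).1, (g i).2) else g l := by
      intro l; by_cases h : l = i <;> simp [Function.update, h]
    rw [Finset.mem_filter]
    refine ⟨?_, ?_, ?_⟩
    · rw [mem_confSet]
      refine ⟨?_, ?_, ?_, ?_, ?_⟩
      · intro l; rw [hval]; split_ifs with h <;> simp [hw, h]
      · intro l; rw [hval]; split_ifs with h
        · exact Finset.insert_nonempty _ _
        · exact hne' l
      · intro l m hlm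
        rw [hval, hval]
        split_ifs with h1 h2 h3
        · exact absurd (h1.trans h2.symm) hlm
        · have him : i ≠ m := by rw [← h1]; exact hlm
          rw [Finset.disjoint_insert_left]
          exact ⟨hnotin m, hdisj i m him⟩
        · have hli : l ≠ i := by rw [← h3]; exact hlm
          rw [Finset.disjoint_insert_right]
          exact ⟨hnotin l, hdisj l i hli⟩
        · exact hdisj l m hlm
      · ext j
        simp only [Finset.mem_biUnion, Finset.mem_univ, true_and, iff_true]
        by_cases hj : j = i₀
        · subst hj
          exact ⟨i, by rw [hval, if_pos rfl]; exact Finset.mem_insert_self _ _⟩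
        · have : j ∈ Finset.univ.biUnion fun l => (g l).1 := by
            rw [hcov]; exact Finset.mem_erase.mpr ⟨hj, Finset.mem_univ j⟩
          rw [Finset.mem_biUnion] at this
          obtain ⟨l, -, hl⟩ := this
          refine ⟨l, ?_⟩
          rw [hval]
          split_ifs with h
          · subst h; exact Finset.mem_insert_of_mem hl
          · exact hl
      · rw [← hsum]
        apply Finset.sum_congr rfl
        intro l _
        rw [hval]; split_ifs with h
        · rw [h]
        · rfl
    · rw [Function.update_self]
      exact Finset.mem_insert_self _ _
    · rw [Function.update_self]
      intro hcontra
      have : (g i).1 ⊆ {i₀} := by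
        rw [← hcontra]; exact Finset.subset_insert _ _
      obtain ⟨a, ha⟩ := hne' i
      have := this ha
      rw [Finset.mem_singleton] at this
      exact hnotin i (this ▸ ha)
  · -- left inverse
    intro f hf
    rw [Finset.mem_filter] at hf
    funext l
    by_cases h : l = i
    · subst h
      simp only [Function.update_self]
      rw [Finset.insert_erase hf.2.1]
    · simp [Function.update, h]
  · -- right inverse
    intro g hg
    rw [mem_confSet] at hg
    have hnotin : i₀ ∉ (g i).1 := by
      intro hl
      have hsub : (g i).1 ⊆ Finset.univ.erase i₀ := by
        rw [← hg.2.2.2.1]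
        exact Finset.subset_biUnion_of_mem (fun j => (g j).1) (Finset.mem_univ i)
      exact (Finset.mem_erase.mp (hsub hl)).1 rfl
    funext l
    by_cases h : l = i
    · subst h
      simp only [Function.update_self]
      rw [Finset.erase_insert hnotin]
    · simp [Function.update, h]
  · -- value equality
    intro f hf
    rw [Finset.mem_filter] at hf
    unfold Tval
    apply Finset.prod_congr rfl
    intro l _
    by_cases h : l = i
    · subst h
      simp only [Function.update_self]
      have : ((f l).1.erase i₀).sum x = (f l).1.sum x := by
        rw [← Finset.sum_erase_add _ _ hf.2.1, hx, add_zero]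
      rw [this]
    · simp [Function.update, h]

lemma bij_sing (P : ℕ → Polynomial ℝ) (hP : IsStirlingPoly P) (x : Fin 7 → ℝ) (i₀ : Fin 7)
    (k : ℕ) (i : Fin (k+1)) :
    ∑ f ∈ (confSet (k+1) Finset.univ).filter (fun f => f i = ({i₀}, 0)), Tval P x f
      = Yval P x i₀ k := by
  classical
  unfold Yval
  apply Finset.sum_nbij' (i := fun f => fun j => f (i.succAbove j))
    (j := fun g => i.insertNth ({i₀}, 0) g)
  · -- forward membership
    intro f hf
    rw [Finset.mem_filter] at hf
    obtain ⟨hf, hfi⟩ := hf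
    rw [mem_confSet] at hf ⊢
    obtain ⟨hw, hne', hdisj, hcov, hsum⟩ := hf
    refine ⟨fun l => hw _, fun l => hne' _, ?_, ?_, ?_⟩
    · intro l m hlm
      exact hdisj _ _ (fun e => hlm (Fin.succAbove_right_injective e))
    · ext j
      simp only [Finset.mem_biUnion, Finset.mem_univ, true_and, Finset.mem_erase]
      constructor
      · rintro ⟨l, hl⟩
        refine ⟨?_, trivial⟩
        intro e; subst e
        have hji : j ∈ (f i).1 := by rw [hfi]; exact Finset.mem_singleton_self j
        have : i.succAbove l ≠ i := Fin.succAbove_ne i l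
        exact Finset.disjoint_left.mp (hdisj _ _ this) hl hji
      · rintro ⟨hj, -⟩
        have : j ∈ Finset.univ.biUnion fun l => (f l).1 := by
          rw [hcov]; exact Finset.mem_univ j
        rw [Finset.mem_biUnion] at this
        obtain ⟨l, -, hl⟩ := this
        have hli : l ≠ i := by
          intro e; subst e
          rw [hfi] at hl
          exact hj (Finset.mem_singleton.mp hl)
        obtain ⟨z, hz⟩ := Fin.exists_succAbove_eq hli
        exact ⟨z, by rw [hz]; exact hl⟩
    · have := Fin.sum_univ_succAbove (fun l => (f l).2) i
      rw [this] at hsum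
      rw [hfi] at hsum
      simpa using hsum
  · -- backward membership
    intro g hg
    rw [mem_confSet] at hg
    obtain ⟨hw, hne', hdisj, hcov, hsum⟩ := hg
    have hnotin : ∀ l, i₀ ∉ (g l).1 := by
      intro l hl
      have hsub : (g l).1 ⊆ Finset.univ.erase i₀ := by
        rw [← hcov]
        exact Finset.subset_biUnion_of_mem (fun j => (g j).1) (Finset.mem_univ l)
      exact (Finset.mem_erase.mp (hsub hl)).1 rfl
    rw [Finset.mem_filter]
    constructor
    · rw [mem_confSet]
      refine ⟨?_, ?_, ?_, ?_, ?_⟩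
      · intro l
        rcases eq_or_ne l i with h | h
        · subst h; rw [Fin.insertNth_apply_same]; norm_num
        · obtain ⟨z, rfl⟩ := Fin.exists_succAbove_eq h
          rw [Fin.insertNth_apply_succAbove]
          exact hw z
      · intro l
        rcases eq_or_ne l i with h | h
        · subst h; rw [Fin.insertNth_apply_same]
          exact Finset.singleton_nonempty i₀
        · obtain ⟨z, rfl⟩ := Fin.exists_succAbove_eq h
          rw [Fin.insertNth_apply_succAbove]
          exact hne' z
      · intro l m hlm
        rcases eq_or_ne l i with h1 | h1 <;> rcases eq_or_ne m i with h2 | h2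
        · exact absurd (h1.trans h2.symm) hlm
        · subst h1
          obtain ⟨z, rfl⟩ := Fin.exists_succAbove_eq h2
          rw [Fin.insertNth_apply_same, Fin.insertNth_apply_succAbove]
          rw [Finset.disjoint_singleton_left]
          exact hnotin z
        · subst h2
          obtain ⟨z, rfl⟩ := Fin.exists_succAbove_eq h1
          rw [Fin.insertNth_apply_same, Fin.insertNth_apply_succAbove]
          rw [Finset.disjoint_singleton_right]
          exact hnotin z
        · obtain ⟨z1, rfl⟩ := Fin.exists_succAbove_eq h1
          obtain ⟨z2, rfl⟩ := Fin.exists_succAbove_eq h2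
          rw [Fin.insertNth_apply_succAbove, Fin.insertNth_apply_succAbove]
          exact hdisj z1 z2 (fun e => hlm (by rw [e]))
      · ext j
        simp only [Finset.mem_biUnion, Finset.mem_univ, true_and, iff_true]
        rcases eq_or_ne j i₀ with h | h
        · subst h
          exact ⟨i, by rw [Fin.insertNth_apply_same]; exact Finset.mem_singleton_self j⟩
        · have : j ∈ Finset.univ.biUnion fun l => (g l).1 := by
            rw [hcov]; exact Finset.mem_erase.mpr ⟨h, Finset.mem_univ j⟩
          rw [Finset.mem_biUnion] at this
          obtain ⟨z, -, hz⟩ := this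
          exact ⟨i.succAbove z, by rw [Fin.insertNth_apply_succAbove]; exact hz⟩
      · have h1 := Fin.sum_univ_succAbove
          (fun l => ((Fin.insertNth (α := fun _ => Finset (Fin 7) × ℕ) i ({i₀}, 0) g) l).2) i
        rw [h1, Fin.insertNth_apply_same]
        have h2 : ∀ z : Fin k,
            ((Fin.insertNth (α := fun _ => Finset (Fin 7) × ℕ) i ({i₀}, 0) g)
              (i.succAbove z)).2 = (g z).2 := by
          intro z; rw [Fin.insertNth_apply_succAbove]
        rw [Finset.sum_congr rfl (fun z _ => h2 z)]
        simpa using hsum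
    · exact Fin.insertNth_apply_same (α := fun _ => Finset (Fin 7) × ℕ) i ({i₀}, 0) g
  · -- left inverse
    intro f hf
    rw [Finset.mem_filter] at hf
    funext l
    rcases eq_or_ne l i with h | h
    · subst h
      rw [Fin.insertNth_apply_same, hf.2]
    · obtain ⟨z, rfl⟩ := Fin.exists_succAbove_eq h
      rw [Fin.insertNth_apply_succAbove]
  · -- right inverse
    intro g hg
    funext z
    rw [Fin.insertNth_apply_succAbove]
  · -- value equality
    intro f hf
    rw [Finset.mem_filter] at hf
    unfold Tval
    rw [Fin.prod_univ_succAbove (fun l => (P (f l).2).eval ((f l).1.sum x)) i]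
    rw [hf.2]
    simp only [Finset.sum_singleton]
    rw [P_zero_eval P hP, one_mul]

lemma inner_eq (P : ℕ → Polynomial ℝ) (hP : IsStirlingPoly P) (x : Fin 7 → ℝ) (i₀ : Fin 7)
    (hx : x i₀ = 0) (k : ℕ) :
    ∑ f ∈ confSet (k+1) Finset.univ, Tval P x f
      = (k+1 : ℝ) * Yval P x i₀ k + (k+1 : ℝ) * Yval P x i₀ (k+1) := by
  classical
  rw [← Finset.sum_filter_add_sum_filter_not (confSet (k+1) Finset.univ)
    (fun f => ∃ l, (f l).1 = {i₀}) (Tval P x)]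
  have hcard : ((Finset.univ : Finset (Fin (k+1))).card : ℝ) = (k+1 : ℝ) := by
    simp
  congr 1
  · -- singleton part = (k+1) * Y k
    have expand : ∀ f ∈ (confSet (k+1) Finset.univ).filter (fun f => ∃ l, (f l).1 = {i₀}),
        Tval P x f = ∑ l : Fin (k+1), if (f l).1 = {i₀} then Tval P x f else 0 := by
      intro f hf
      rw [Finset.mem_filter] at hf
      obtain ⟨hf, l₀, hl₀⟩ := hf
      rw [mem_confSet] at hf
      rw [Finset.sum_eq_single_of_mem l₀ (Finset.mem_univ l₀)]
      · rw [if_pos hl₀]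
      · intro b _ hb
        rw [if_neg]
        intro hb'
        apply hb
        by_contra hne
        have := hf.2.2.1 b l₀ hne
        rw [hb', hl₀, Finset.disjoint_singleton_left] at this
        exact this (Finset.mem_singleton_self i₀)
    rw [Finset.sum_congr rfl expand, Finset.sum_comm]
    have perl : ∀ l : Fin (k+1),
        (∑ f ∈ (confSet (k+1) Finset.univ).filter (fun f => ∃ l', (f l').1 = {i₀}),
          if (f l).1 = {i₀} then Tval P x f else 0) = Yval P x i₀ k := by
      intro l
      rw [← Finset.sum_filter]
      rw [Finset.filter_filter]
      have hfeq : (confSet (k+1) Finset.univ).filter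
          (fun f => (∃ l', (f l').1 = {i₀}) ∧ (f l).1 = {i₀}) =
          (confSet (k+1) Finset.univ).filter (fun f => (f l).1 = {i₀}) := by
        apply Finset.filter_congr
        intro f _
        constructor
        · rintro ⟨-, h⟩; exact h
        · intro h; exact ⟨⟨l, h⟩, h⟩
      rw [hfeq]
      rw [← Finset.sum_filter_add_sum_filter_not
        ((confSet (k+1) Finset.univ).filter (fun f => (f l).1 = {i₀}))
        (fun f => (f l).2 = 0) (Tval P x)]
      have hzero : ∑ f ∈ (((confSet (k+1) Finset.univ).filter (fun f => (f l).1 = {i₀})).filter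
          (fun f => ¬ (f l).2 = 0)), Tval P x f = 0 := by
        apply Finset.sum_eq_zero
        intro f hf
        simp only [Finset.mem_filter] at hf
        obtain ⟨⟨hf, h1⟩, h2⟩ := hf
        rw [mem_confSet] at hf
        unfold Tval
        apply Finset.prod_eq_zero (Finset.mem_univ l)
        rw [h1, Finset.sum_singleton, hx]
        exact P_pos_eval_zero P hP (Nat.one_le_iff_ne_zero.mpr h2) (by have := hf.1 l; omega)
      rw [hzero, add_zero]
      have hfeq2 : ((confSet (k+1) Finset.univ).filter (fun f => (f l).1 = {i₀})).filter
          (fun f => (f l).2 = 0) = (confSet (k+1) Finset.univ).filter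
          (fun f => f l = ({i₀}, 0)) := by
        rw [Finset.filter_filter]
        apply Finset.filter_congr
        intro f _
        rw [Prod.ext_iff]
      rw [hfeq2]
      exact bij_sing P hP x i₀ k l
    rw [Finset.sum_congr rfl (fun l _ => perl l)]
    rw [Finset.sum_const, Finset.card_univ, Fintype.card_fin, nsmul_eq_mul]
    push_cast
    ring
  · -- big-block part = (k+1) * Y (k+1)
    have expand : ∀ f ∈ (confSet (k+1) Finset.univ).filter (fun f => ¬ ∃ l, (f l).1 = {i₀}),
        Tval P x f = ∑ l : Fin (k+1), if i₀ ∈ (f l).1 then Tval P x f else 0 := by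
      intro f hf
      rw [Finset.mem_filter] at hf
      obtain ⟨hf, -⟩ := hf
      rw [mem_confSet] at hf
      have : i₀ ∈ Finset.univ.biUnion fun l => (f l).1 := by
        rw [hf.2.2.2.1]; exact Finset.mem_univ i₀
      rw [Finset.mem_biUnion] at this
      obtain ⟨l₀, -, hl₀⟩ := this
      rw [Finset.sum_eq_single_of_mem l₀ (Finset.mem_univ l₀)]
      · rw [if_pos hl₀]
      · intro b _ hb
        rw [if_neg]
        intro hb'
        exact hb ((Finset.disjoint_left.mp (hf.2.2.1 b l₀ hb) hb') hl₀).elim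
    rw [Finset.sum_congr rfl expand, Finset.sum_comm]
    have perl : ∀ l : Fin (k+1),
        (∑ f ∈ (confSet (k+1) Finset.univ).filter (fun f => ¬ ∃ l', (f l').1 = {i₀}),
          if i₀ ∈ (f l).1 then Tval P x f else 0) = Yval P x i₀ (k+1) := by
      intro l
      rw [← Finset.sum_filter]
      rw [Finset.filter_filter]
      have hfeq : (confSet (k+1) Finset.univ).filter
          (fun f => (¬ ∃ l', (f l').1 = {i₀}) ∧ i₀ ∈ (f l).1) =
          (confSet (k+1) Finset.univ).filter (fun f => i₀ ∈ (f l).1 ∧ (f l).1 ≠ {i₀}) := by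
        apply Finset.filter_congr
        intro f hf
        rw [mem_confSet] at hf
        constructor
        · rintro ⟨h1, h2⟩
          exact ⟨h2, fun e => h1 ⟨l, e⟩⟩
        · rintro ⟨h1, h2⟩
          refine ⟨?_, h1⟩
          rintro ⟨l', hl'⟩
          rcases eq_or_ne l' l with e | e
          · exact h2 (e ▸ hl')
          · have := hf.2.2.1 l' l e
            rw [hl', Finset.disjoint_singleton_left] at this
            exact this h1
      rw [hfeq]
      exact bij_big P x i₀ hx k l
    rw [Finset.sum_congr rfl (fun l _ => perl l)]
    rw [Finset.sum_const, Finset.card_univ, Fintype.card_fin, nsmul_eq_mul]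
    push_cast
    ring

lemma Y_zero (P : ℕ → Polynomial ℝ) (x : Fin 7 → ℝ) (i₀ : Fin 7) : Yval P x i₀ 0 = 0 := by
  classical
  unfold Yval
  have hempty : confSet 0 (Finset.univ.erase i₀) = ∅ := by
    apply Finset.eq_empty_of_forall_notMem
    intro g hg
    rw [mem_confSet] at hg
    have hcov := hg.2.2.2.1
    have hne : (Finset.univ.erase i₀ : Finset (Fin 7)).Nonempty := by
      rw [← Finset.card_pos, Finset.card_erase_of_mem (Finset.mem_univ i₀)]
      simp
    rw [← hcov] at hne
    obtain ⟨a, ha⟩ := hne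
    rw [Finset.mem_biUnion] at ha
    obtain ⟨l, -, -⟩ := ha
    exact l.elim0
  rw [hempty, Finset.sum_empty]

set_option maxRecDepth 10000 in
lemma Y_seven (P : ℕ → Polynomial ℝ) (x : Fin 7 → ℝ) (i₀ : Fin 7) : Yval P x i₀ 7 = 0 := by
  classical
  unfold Yval
  have hempty : confSet 7 (Finset.univ.erase i₀) = ∅ := by
    apply Finset.eq_empty_of_forall_notMem
    intro g hg
    rw [mem_confSet] at hg
    obtain ⟨-, hne, hdisj, hcov, -⟩ := hg
    have h1 : (Finset.univ.biUnion fun l => (g l).1).card = ∑ l, ((g l).1).card :=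
      Finset.card_biUnion (by intro a _ b _ hab; exact hdisj a b hab)
    have h2 : ∑ l : Fin 7, (1:ℕ) ≤ ∑ l, ((g l).1).card :=
      Finset.sum_le_sum (fun l _ => Finset.card_pos.mpr (hne l))
    have h3 : (Finset.univ.erase i₀ : Finset (Fin 7)).card = 6 := by
      rw [Finset.card_erase_of_mem (Finset.mem_univ i₀)]
      simp
    rw [hcov, h3] at h1
    simp only [Finset.sum_const, Finset.card_univ, Fintype.card_fin, smul_eq_mul, mul_one] at h2
    omega
  rw [hempty, Finset.sum_empty]

lemma inner_eq' (P : ℕ → Polynomial ℝ) (hP : IsStirlingPoly P) (x : Fin 7 → ℝ) (i₀ : Fin 7)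
    (hx : x i₀ = 0) (r : ℕ) (hr : r ≠ 0) :
    ∑ f ∈ confSet r Finset.univ, Tval P x f
      = (r : ℝ) * Yval P x i₀ (r-1) + (r : ℝ) * Yval P x i₀ r := by
  obtain ⟨k, rfl⟩ := Nat.exists_eq_succ_of_ne_zero hr
  have := inner_eq P hP x i₀ hx k
  simp only [Nat.succ_sub_one]
  rw [this]
  push_cast
  ring

lemma Econf_zero (P : ℕ → Polynomial ℝ) (hP : IsStirlingPoly P) (x : Fin 7 → ℝ) (i₀ : Fin 7)
    (hx : x i₀ = 0) : Econf P x = 0 := by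
  classical
  unfold Econf
  have hsep : ∀ r : ℕ, (∑ f ∈ confSet r Finset.univ,
      (-1:ℝ)^r * (1/(r:ℝ)) * ∏ i, (P (f i).2).eval ((f i).1.sum x))
      = (-1:ℝ)^r * (1/(r:ℝ)) * ∑ f ∈ confSet r Finset.univ, Tval P x f := by
    intro r
    rw [Finset.mul_sum]
    apply Finset.sum_congr rfl
    intro f _
    rfl
  rw [Finset.sum_congr rfl (fun r _ => hsep r)]
  rw [Finset.sum_range_succ, Finset.sum_range_succ, Finset.sum_range_succ, Finset.sum_range_succ,
    Finset.sum_range_succ, Finset.sum_range_succ, Finset.sum_range_succ, Finset.sum_range_succ,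
    Finset.sum_range_zero]
  rw [inner_eq' P hP x i₀ hx 1 (by norm_num), inner_eq' P hP x i₀ hx 2 (by norm_num),
    inner_eq' P hP x i₀ hx 3 (by norm_num), inner_eq' P hP x i₀ hx 4 (by norm_num),
    inner_eq' P hP x i₀ hx 5 (by norm_num), inner_eq' P hP x i₀ hx 6 (by norm_num),
    inner_eq' P hP x i₀ hx 7 (by norm_num)]
  norm_num [Y_zero P x i₀, Y_seven P x i₀]
  ring

open scoped Classical in
lemma WCS_eq_Econf (P : ℕ → Polynomial ℝ) (S : Finset ℝ) (hS : S.card = 7) (x : Fin 7 → ℝ)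
    (hinj : Function.Injective x) (him : Finset.univ.image x = S) :
    weightedConfigSum P S 3 = Econf P x := by
  unfold weightedConfigSum Econf
  rw [hS]
  apply Finset.sum_congr rfl
  intro r _
  symm
  apply Finset.sum_nbij' (i := fun f => fun l => ((f l).1.image x, (f l).2))
    (j := fun f => fun l => ((f l).1.preimage x hinj.injOn, (f l).2))
  · -- forward membership : Fin world → S world
    intro f hf
    rw [mem_confSet] at hf
    obtain ⟨hw, hne, hdisj, hcov, hsum⟩ := hf
    rw [Finset.mem_filter]
    refine ⟨?_, ?_, ?_, ?_, ?_⟩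
    · rw [Fintype.mem_piFinset]
      intro l
      rw [Finset.mem_product]
      constructor
      · rw [Finset.mem_powerset, ← him]
        exact Finset.image_subset_image (Finset.subset_univ _)
      · rw [Finset.mem_range]
        exact hw l
    · intro l
      exact (hne l).image x
    · intro l m hlm
      exact (Finset.disjoint_image hinj).mpr (hdisj l m hlm)
    · rw [← Finset.biUnion_image, hcov, him]
    · exact hsum
  · -- backward membership : S world → Fin world
    intro f hf
    rw [Finset.mem_filter, Fintype.mem_piFinset] at hf
    obtain ⟨hpi, hne, hdisj, hcov, hsum⟩ := hf
    have hsub : ∀ l, (f l).1 ⊆ S := by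
      intro l
      have := hpi l
      rw [Finset.mem_product, Finset.mem_powerset] at this
      exact this.1
    rw [mem_confSet]
    refine ⟨?_, ?_, ?_, ?_, ?_⟩
    · intro l
      have := hpi l
      rw [Finset.mem_product, Finset.mem_range] at this
      exact this.2
    · intro l
      obtain ⟨c, hc⟩ := hne l
      have : c ∈ S := hsub l hc
      rw [← him, Finset.mem_image] at this
      obtain ⟨i, -, rfl⟩ := this
      exact ⟨i, by simp only [Finset.mem_preimage]; exact hc⟩
    · intro l m hlm
      rw [Finset.disjoint_left]
      intro a h1 h2
      rw [Finset.mem_preimage] at h1 h2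
      exact Finset.disjoint_left.mp (hdisj l m hlm) h1 h2
    · ext i
      simp only [Finset.mem_biUnion, Finset.mem_univ, true_and, iff_true]
      have : x i ∈ S := by
        rw [← him]
        exact Finset.mem_image_of_mem x (Finset.mem_univ i)
      rw [← hcov, Finset.mem_biUnion] at this
      obtain ⟨l, -, hl⟩ := this
      exact ⟨l, by simp only [Finset.mem_preimage]; exact hl⟩
    · exact hsum
  · -- left inverse
    intro f hf
    funext l
    refine Prod.ext ?_ rfl
    simp only
    ext i
    rw [Finset.mem_preimage, Finset.mem_image]
    constructor
    · rintro ⟨a, ha, hax⟩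
      rwa [← hinj hax]
    · intro h
      exact ⟨i, h, rfl⟩
  · -- right inverse
    intro f hf
    rw [Finset.mem_filter, Fintype.mem_piFinset] at hf
    have hsub : ∀ l, (f l).1 ⊆ S := by
      intro l
      have := hf.1 l
      rw [Finset.mem_product, Finset.mem_powerset] at this
      exact this.1
    funext l
    refine Prod.ext ?_ rfl
    simp only
    ext c
    rw [Finset.mem_image]
    constructor
    · rintro ⟨i, hi, rfl⟩
      exact Finset.mem_preimage.mp hi
    · intro hc
      have : c ∈ S := hsub l hc
      rw [← him, Finset.mem_image] at this
      obtain ⟨i, -, rfl⟩ := this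
      exact ⟨i, by simp only [Finset.mem_preimage]; exact hc, rfl⟩
  · -- values
    intro f hf
    congr 1
    apply Finset.prod_congr rfl
    intro l _
    simp only
    rw [Finset.sum_image (fun a _ b _ h => hinj h)]

lemma Wpoly_zero (P : ℕ → Polynomial ℝ) (hP : IsStirlingPoly P) : Wpoly P = 0 := by
  apply mv_zero_of_vanishing _ (Wpoly_totalDegree P hP)
  intro i x hx
  rw [eval_Wpoly]
  exact Econf_zero P hP x i hx

theorem weighted_config_identity_g7_w3 (P : ℕ → Polynomial ℝ) (hP : IsStirlingPoly P)
    (S : Finset ℝ) (hS : S.card = 7) :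
    weightedConfigSum P S 3 = 0 := by
  classical
  set e := S.orderIsoOfFin hS with he
  set x : Fin 7 → ℝ := fun i => (e i : ℝ) with hxdef
  have hinj : Function.Injective x := by
    intro a b hab
    apply e.injective
    exact Subtype.ext hab
  have him : Finset.univ.image x = S := by
    ext c
    rw [Finset.mem_image]
    constructor
    · rintro ⟨i, -, rfl⟩
      exact (e i).2
    · intro hc
      exact ⟨e.symm ⟨c, hc⟩, Finset.mem_univ _, by simp [hxdef]⟩
  rw [WCS_eq_Econf P S hS x hinj him, ← eval_Wpoly, Wpoly_zero P hP, map_zero]
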